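/- Let G be an n-vertex graph with independence number α = n−k where k ≥ C_x·δ for some δ ≥ 1 and x > 0, with C_x = ln(1+x)/(ln(1+x) − x/(1+x)). Then P(G,x) ≤ (1+x)^{n−δ}. -/

import Mathlib

/-- A finset of vertices is independent: no edge inside. -/
def SimpleGraph.IsIndepFinset {V : Type*} (G : SimpleGraph V) (s : Finset V) : Prop :=
  ∀ v ∈ s, ∀ w ∈ s, ¬ G.Adj v w

/-- `indepCount G t` = number of independent sets of size `t` in `G`. -/
noncomputable def indepCount {V : Type*} [Fintype V] (G : SimpleGraph V) (t : ℕ) : ℕ :=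
  Nat.card {s : Finset V // s.card = t ∧ G.IsIndepFinset s}

/-- `indepTotal G` = total number of independent sets in `G` (including ∅). -/
noncomputable def indepTotal {V : Type*} [Fintype V] (G : SimpleGraph V) : ℕ :=
  Nat.card {s : Finset V // G.IsIndepFinset s}

open Classical in
/-- The independence polynomial `P(G,x) = Σ_t i_t(G) xᵗ`. -/
noncomputable def indPoly {V : Type*} [Fintype V] (G : SimpleGraph V) (x : ℝ) : ℝ :=
  ∑ s ∈ Finset.univ.filter (fun s : Finset V => G.IsIndepFinset s), x ^ s.card

private lemma sum_powerset_pow_card {V : Type*} [DecidableEq V] (s : Finset V) (y : ℝ) :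
    ∑ t ∈ s.powerset, y ^ t.card = (1 + y) ^ s.card := by
  calc ∑ t ∈ s.powerset, y ^ t.card
      = ∑ t ∈ s.powerset, (∏ _i ∈ t, y) * ∏ _i ∈ s \ t, (1:ℝ) := by
        simp [Finset.prod_const]
    _ = ∏ _i ∈ s, (y + 1) := (Finset.prod_add _ _ s).symm
    _ = (1 + y) ^ s.card := by rw [Finset.prod_const, add_comm]

theorem indPoly_small_indepNum {V : Type*} [Fintype V] (G : SimpleGraph V)
    (n k δ : ℕ) (x : ℝ) (hx : 0 < x) (hδ : 1 ≤ δ)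
    (hcard : Fintype.card V = n) (hkn : k ≤ n)
    (hα : IsGreatest {m : ℕ | ∃ s : Finset V, s.card = m ∧ G.IsIndepFinset s} (n - k))
    (hk : Real.log (1 + x) / (Real.log (1 + x) - x / (1 + x)) * δ ≤ (k : ℝ)) :
    indPoly G x ≤ (1 + x) ^ (n - δ) := by
  classical
  obtain ⟨⟨A, hAcard, hAind⟩, hmax⟩ := hα
  have hx1 : (0:ℝ) < 1 + x := by linarith
  set y := x / (1 + x) with hy
  set L := Real.log (1 + x) with hL
  have hy0 : 0 < y := div_pos hx hx1
  -- y < L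
  have hyL : y < L := by
    have h1 : (0:ℝ) < 1 / (1 + x) := by positivity
    have h2 : 1 / (1 + x) ≠ 1 := by
      intro h
      have : (1:ℝ) = 1 + x := by field_simp at h; linarith
      linarith
    have h := Real.log_lt_sub_one_of_pos h1 h2
    rw [Real.log_div one_ne_zero (ne_of_gt hx1), Real.log_one] at h
    have : 1 / (1 + x) - 1 = -y := by rw [hy]; field_simp; ring
    rw [this] at h
    linarith
  have hL0 : 0 < L := lt_trans hy0 hyL
  have hLy : 0 < L - y := by linarith
  -- δ ≤ k
  have hδk : δ ≤ k := by
    have h1 : (1:ℝ) ≤ L / (L - y) := by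
      rw [le_div_iff₀ hLy]; linarith
    have h2 : (δ:ℝ) ≤ (k:ℝ) := by
      calc (δ:ℝ) = 1 * δ := (one_mul _).symm
        _ ≤ L / (L - y) * δ := by
            apply mul_le_mul_of_nonneg_right h1 (by positivity)
        _ ≤ k := hk
    exact_mod_cast h2
  -- key analytic inequality:  k*y ≤ (k - δ) * L
  have hky : (k:ℝ) * y ≤ ((k:ℝ) - (δ:ℝ)) * L := by
    have h1 : L / (L - y) * δ * (L - y) ≤ (k:ℝ) * (L - y) :=
      mul_le_mul_of_nonneg_right hk (le_of_lt hLy)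
    have h2 : L / (L - y) * δ * (L - y) = L * δ := by
      field_simp
    rw [h2] at h1
    nlinarith
  -- cardinality of Aᶜ
  have hAsub : A.card ≤ n := by
    rw [← hcard]; exact A.card_le_univ.trans_eq (by simp [hcard])
  have hcompl : Aᶜ.card = k := by
    have h := Finset.card_compl A
    rw [hcard, hAcard] at h
    omega
  -- the set of independent sets
  set S : Finset (Finset V) := Finset.univ.filter (fun s => G.IsIndepFinset s) with hS
  have hindPoly : indPoly G x = ∑ s ∈ S, x ^ s.card := by
    unfold indPoly
    apply Finset.sum_congr _ (fun _ _ => rfl)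
    apply Finset.filter_congr_decidable
  -- split the sum according to s \ A
  have hmaps : ∀ s ∈ S, s \ A ∈ Aᶜ.powerset := by
    intro s _
    rw [Finset.mem_powerset]
    intro v hv
    rw [Finset.mem_compl]
    exact (Finset.mem_sdiff.mp hv).2
  have hsplit : indPoly G x
      = ∑ C ∈ Aᶜ.powerset, ∑ s ∈ S.filter (fun s => s \ A = C), x ^ s.card := by
    rw [hindPoly, Finset.sum_fiberwise_of_maps_to hmaps]
  -- bound each fiber
  have hfiber : ∀ C ∈ Aᶜ.powerset,
      (∑ s ∈ S.filter (fun s => s \ A = C), x ^ s.card)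
        ≤ (1 + x) ^ A.card * y ^ C.card := by
    intro C hC
    rcases Finset.eq_empty_or_nonempty (S.filter (fun s => s \ A = C)) with he | ⟨s0, hs0⟩
    · rw [he, Finset.sum_empty]; positivity
    · rw [Finset.mem_filter] at hs0
      obtain ⟨hs0S, hs0C⟩ := hs0
      rw [hS, Finset.mem_filter] at hs0S
      have hs0ind : G.IsIndepFinset s0 := hs0S.2
      have hCind : G.IsIndepFinset C := by
        intro v hv w hw
        rw [← hs0C] at hv hw
        exact hs0ind v (Finset.mem_sdiff.mp hv).1 w (Finset.mem_sdiff.mp hw).1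
      have hCA : ∀ v ∈ C, v ∉ A := by
        intro v hv
        have := Finset.mem_powerset.mp hC hv
        exact Finset.mem_compl.mp this
      -- neighborhood of C inside A
      set NC : Finset V := A.filter (fun a => ∃ c ∈ C, G.Adj a c) with hNC
      have hNCsub : NC ⊆ A := Finset.filter_subset _ _
      -- key claim: C.card ≤ NC.card
      have hkey : C.card ≤ NC.card := by
        by_contra hlt
        push_neg at hlt
        set T : Finset V := (A \ NC) ∪ C with hT
        have hTind : G.IsIndepFinset T := by
          intro v hv w hw hadj
          rw [hT, Finset.mem_union] at hv hw
          rcases hv with hv | hv <;> rcases hw with hw | hw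
          · exact hAind v (Finset.mem_sdiff.mp hv).1 w (Finset.mem_sdiff.mp hw).1 hadj
          · have hvNC := (Finset.mem_sdiff.mp hv).2
            exact hvNC (Finset.mem_filter.mpr ⟨(Finset.mem_sdiff.mp hv).1, w, hw, hadj⟩)
          · have hwNC := (Finset.mem_sdiff.mp hw).2
            exact hwNC (Finset.mem_filter.mpr ⟨(Finset.mem_sdiff.mp hw).1, v, hv, hadj.symm⟩)
          · exact hCind v hv w hw hadj
        have hTmem : T.card ∈ {m : ℕ | ∃ s : Finset V, s.card = m ∧ G.IsIndepFinset s} :=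
          ⟨T, rfl, hTind⟩
        have hTle : T.card ≤ n - k := hmax hTmem
        have hdisj : Disjoint (A \ NC) C := by
          rw [Finset.disjoint_right]
          intro v hv
          rw [Finset.mem_sdiff]
          exact fun h => hCA v hv h.1
        have hTcard : T.card = (A.card - NC.card) + C.card := by
          rw [hT, Finset.card_union_of_disjoint hdisj, Finset.card_sdiff_of_subset hNCsub]
        have hNCA : NC.card ≤ A.card := Finset.card_le_card hNCsub
        omega
      have hCcardA : C.card ≤ A.card := hkey.trans (Finset.card_le_card hNCsub)
      -- each s in the fiber has s ∩ A ⊆ A \ NC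
      have hinterSub : ∀ s ∈ S.filter (fun s => s \ A = C), s ∩ A ∈ (A \ NC).powerset := by
        intro s hs
        rw [Finset.mem_filter] at hs
        obtain ⟨hsS, hsC⟩ := hs
        rw [hS, Finset.mem_filter] at hsS
        have hsind : G.IsIndepFinset s := hsS.2
        rw [Finset.mem_powerset]
        intro a ha
        rw [Finset.mem_inter] at ha
        rw [Finset.mem_sdiff]
        refine ⟨ha.2, fun haNC => ?_⟩
        obtain ⟨_, c, hcC, hadj⟩ := Finset.mem_filter.mp haNC
        have hcs : c ∈ s := by
          rw [← hsC] at hcC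
          exact (Finset.mem_sdiff.mp hcC).1
        exact hsind a ha.1 c hcs hadj
      -- the cards
      have hcardEq : ∀ s ∈ S.filter (fun s => s \ A = C),
          s.card = (s ∩ A).card + C.card := by
        intro s hs
        rw [Finset.mem_filter] at hs
        rw [← hs.2, add_comm]
        exact (Finset.card_sdiff_add_card_inter s A).symm ▸ (by
          rw [← Finset.card_sdiff_add_card_inter s A, add_comm])
      -- injective on fiber
      have hinj : ∀ s ∈ S.filter (fun s => s \ A = C), ∀ t ∈ S.filter (fun s => s \ A = C),
          s ∩ A = t ∩ A → s = t := by
        intro s hs t ht hst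
        have hs2 := (Finset.mem_filter.mp hs).2
        have ht2 := (Finset.mem_filter.mp ht).2
        have hiu : ∀ u : Finset V, (u ∩ A) ∪ (u \ A) = u := by
          intro u; ext v
          simp only [Finset.mem_union, Finset.mem_inter, Finset.mem_sdiff]
          tauto
        have h1 : s = (s ∩ A) ∪ (s \ A) := (hiu s).symm
        have h2 : t = (t ∩ A) ∪ (t \ A) := (hiu t).symm
        rw [h1, h2, hs2, ht2, hst]
      calc (∑ s ∈ S.filter (fun s => s \ A = C), x ^ s.card)
          = ∑ s ∈ S.filter (fun s => s \ A = C), x ^ C.card * x ^ (s ∩ A).card := by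
            apply Finset.sum_congr rfl
            intro s hs
            rw [hcardEq s hs, pow_add, mul_comm]
        _ = x ^ C.card * ∑ s ∈ S.filter (fun s => s \ A = C), x ^ (s ∩ A).card := by
            rw [Finset.mul_sum]
        _ = x ^ C.card *
              ∑ B ∈ (S.filter (fun s => s \ A = C)).image (fun s => s ∩ A), x ^ B.card := by
            rw [Finset.sum_image hinj]
        _ ≤ x ^ C.card * ∑ B ∈ (A \ NC).powerset, x ^ B.card := by
            apply mul_le_mul_of_nonneg_left _ (by positivity)
            apply Finset.sum_le_sum_of_subset_of_nonneg
            · intro B hB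
              obtain ⟨s, hs, rfl⟩ := Finset.mem_image.mp hB
              exact hinterSub s hs
            · intro B _ _; positivity
        _ = x ^ C.card * (1 + x) ^ (A \ NC).card := by
            rw [sum_powerset_pow_card]
        _ ≤ x ^ C.card * (1 + x) ^ (A.card - C.card) := by
            apply mul_le_mul_of_nonneg_left _ (by positivity)
            apply pow_le_pow_right₀ (by linarith)
            rw [Finset.card_sdiff_of_subset hNCsub]
            omega
        _ = (1 + x) ^ A.card * y ^ C.card := by
            rw [hy, div_pow]
            have h1 : (1 + x) ^ A.card = (1 + x) ^ (A.card - C.card) * (1 + x) ^ C.card := by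
              rw [← pow_add]
              congr 1
              omega
            rw [h1]
            field_simp
  -- sum up
  have htotal : indPoly G x ≤ (1 + x) ^ A.card * (1 + y) ^ k := by
    rw [hsplit]
    calc (∑ C ∈ Aᶜ.powerset, ∑ s ∈ S.filter (fun s => s \ A = C), x ^ s.card)
        ≤ ∑ C ∈ Aᶜ.powerset, (1 + x) ^ A.card * y ^ C.card :=
          Finset.sum_le_sum hfiber
      _ = (1 + x) ^ A.card * ∑ C ∈ Aᶜ.powerset, y ^ C.card := by rw [Finset.mul_sum]
      _ = (1 + x) ^ A.card * (1 + y) ^ Aᶜ.card := by rw [sum_powerset_pow_card]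
      _ = (1 + x) ^ A.card * (1 + y) ^ k := by rw [hcompl]
  -- analytic finish
  have hexp : (1 + y) ^ k ≤ (1 + x) ^ (k - δ) := by
    calc (1 + y) ^ k ≤ (Real.exp y) ^ k := by
          apply pow_le_pow_left₀ (by linarith)
          linarith [Real.add_one_le_exp y]
      _ = Real.exp ((k:ℝ) * y) := by rw [← Real.exp_nat_mul]
      _ ≤ Real.exp (((k:ℝ) - (δ:ℝ)) * L) := Real.exp_le_exp.mpr hky
      _ = (1 + x) ^ (k - δ) := by
          have h1 : ((k:ℝ) - (δ:ℝ)) = ((k - δ : ℕ) : ℝ) := by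
            rw [Nat.cast_sub hδk]
          rw [h1, Real.exp_nat_mul, Real.exp_log hx1]
  calc indPoly G x ≤ (1 + x) ^ A.card * (1 + y) ^ k := htotal
    _ ≤ (1 + x) ^ A.card * (1 + x) ^ (k - δ) := by
        apply mul_le_mul_of_nonneg_left hexp (by positivity)
    _ = (1 + x) ^ (n - δ) := by
        rw [← pow_add, hAcard]
        congr 1
        omega
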